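/- Let n ≥ 1 be a natural number and b₃, b₄, c₁, c₂ integers with c₁·(b₄ − 1) − c₂·b₃ ≠ 0. Then for all real numbers ε, δ there exist integers a, b, real numbers x, y, and a real number t with 0 ≤ t ≤ 1 such that x + a = x + b₃·y·(∑_{i=0}^{n−1} b₄^i) + (n·c₁ + b₃·c₂·∑_{i=0}^{n−1} i·b₄^{n−1−i})·t + b₃·δ·(∑_{i=0}^{n−1} i·b₄^{n−1−i}) + n·ε and y + b = b₄^n·y + c₂·t·(∑_{i=0}^{n−1} b₄^i) + δ·(∑_{i=0}^{n−1} b₄^i). -/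

import Mathlib

lemma hit_aux (g P Q : ℝ) (hg : 0 < g) (hP : g ≤ |P|) :
    ∃ (k : ℤ) (t : ℝ), 0 ≤ t ∧ t ≤ 1 ∧ P * t + Q = g * k := by
  have hP0 : P ≠ 0 := by
    intro h0; rw [h0, abs_zero] at hP; linarith
  have hQ : g * (Q / g) = Q := by field_simp
  rcases lt_or_gt_of_ne hP0 with hneg | hpos
  · have habs : g ≤ -P := by rwa [abs_of_neg hneg] at hP
    have h1 : g * ⌊Q / g⌋ ≤ Q := by
      have := Int.floor_le (Q / g); nlinarith
    have h2 : Q - g ≤ g * ⌊Q / g⌋ := by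
      have := Int.sub_one_lt_floor (Q / g); nlinarith
    refine ⟨⌊Q / g⌋, (g * ⌊Q / g⌋ - Q) / P, ?_, ?_, ?_⟩
    · rw [div_nonneg_iff]; right; constructor <;> linarith
    · rw [div_le_one_of_neg hneg]; linarith
    · field_simp
      ring
  · have habs : g ≤ P := by rwa [abs_of_pos hpos] at hP
    have h1 : Q ≤ g * ⌈Q / g⌉ := by
      have := Int.le_ceil (Q / g); nlinarith
    have h2 : g * ⌈Q / g⌉ ≤ Q + g := by
      have := Int.ceil_lt_add_one (Q / g); nlinarith
    refine ⟨⌈Q / g⌉, (g * ⌈Q / g⌉ - Q) / P, ?_, ?_, ?_⟩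
    · apply div_nonneg (by linarith) (le_of_lt hpos)
    · rw [div_le_one hpos]; linarith
    · field_simp
      ring

lemma T_identity (x : ℝ) (n : ℕ) :
    (x - 1) * ∑ i ∈ Finset.range n, (i : ℝ) * x ^ (n - 1 - i) =
      (∑ i ∈ Finset.range n, x ^ i) - n := by
  induction n with
  | zero => simp
  | succ n ih =>
    have hstep : ∑ i ∈ Finset.range (n + 1), (i : ℝ) * x ^ (n + 1 - 1 - i) =
        x * (∑ i ∈ Finset.range n, (i : ℝ) * x ^ (n - 1 - i)) + n := by
      rw [Finset.sum_range_succ, Finset.mul_sum]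
      have h0 : (n : ℝ) * x ^ (n + 1 - 1 - n) = n := by simp
      rw [h0]
      congr 1
      apply Finset.sum_congr rfl
      intro i hi
      have hi' : i < n := Finset.mem_range.mp hi
      have : n + 1 - 1 - i = (n - 1 - i) + 1 := by omega
      rw [this, pow_succ]; ring
    rw [hstep, geom_sum_succ]
    push_cast
    linear_combination x * ih

theorem periodic_point_exists (n : ℕ) (hn : 1 ≤ n) (b₃ b₄ c₁ c₂ : ℤ)
    (h : c₁ * (b₄ - 1) - c₂ * b₃ ≠ 0) :
    ∀ ε δ : ℝ, ∃ (a b : ℤ) (x y t : ℝ), 0 ≤ t ∧ t ≤ 1 ∧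
      x + (a : ℝ) =
        x + (b₃ : ℝ) * y * (∑ i ∈ Finset.range n, (b₄ : ℝ) ^ i) +
          ((n : ℝ) * (c₁ : ℝ) + (b₃ : ℝ) * (c₂ : ℝ) *
            ∑ i ∈ Finset.range n, (i : ℝ) * (b₄ : ℝ) ^ (n - 1 - i)) * t +
          (b₃ : ℝ) * δ * (∑ i ∈ Finset.range n, (i : ℝ) * (b₄ : ℝ) ^ (n - 1 - i)) + (n : ℝ) * ε ∧
      y + (b : ℝ) =
        (b₄ : ℝ) ^ n * y + (c₂ : ℝ) * t * (∑ i ∈ Finset.range n, (b₄ : ℝ) ^ i) +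
          δ * (∑ i ∈ Finset.range n, (b₄ : ℝ) ^ i) := by
  intro ε δ
  set S : ℝ := ∑ i ∈ Finset.range n, (b₄ : ℝ) ^ i with hS_def
  set T : ℝ := ∑ i ∈ Finset.range n, (i : ℝ) * (b₄ : ℝ) ^ (n - 1 - i) with hT_def
  have hS : S * ((b₄ : ℝ) - 1) = (b₄ : ℝ) ^ n - 1 := geom_sum_mul _ n
  have hT : ((b₄ : ℝ) - 1) * T = S - n := T_identity _ n
  rcases eq_or_ne b₄ 1 with hb4 | hb4
  · -- Case B1 : b₄ = 1
    subst hb4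
    have hc2 : c₂ ≠ 0 := by intro h0; apply h; rw [h0]; ring
    have hb3 : b₃ ≠ 0 := by intro h0; apply h; rw [h0]; ring
    have hSn : S = n := by rw [hS_def]; push_cast; simp
    have hbound : (1 : ℝ) ≤ |(c₂ : ℝ) * n| := by
      rw [abs_mul]
      have h1 : (1:ℝ) ≤ |(c₂ : ℝ)| := by
        have := Int.one_le_abs hc2
        calc (1:ℝ) ≤ ((|c₂| : ℤ) : ℝ) := by exact_mod_cast this
          _ = |(c₂ : ℝ)| := by push_cast; rfl
      have h2 : (1:ℝ) ≤ |(n : ℝ)| := by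
        rw [abs_of_nonneg (by positivity)]; exact_mod_cast hn
      nlinarith
    obtain ⟨b, t, ht0, ht1, hb⟩ := hit_aux 1 ((c₂ : ℝ) * n) (δ * n) one_pos hbound
    rw [one_mul] at hb
    have hb3n : (b₃ : ℝ) * n ≠ 0 := by
      have h1 : (b₃ : ℝ) ≠ 0 := by exact_mod_cast hb3
      have hn' : (n : ℝ) ≠ 0 := by positivity
      exact mul_ne_zero h1 hn'
    refine ⟨0, b, 0, -(((n : ℝ) * c₁ + b₃ * c₂ * T) * t + b₃ * δ * T + n * ε) / ((b₃ : ℝ) * n),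
      t, ht0, ht1, ?_, ?_⟩
    · push_cast
      rw [hSn]
      field_simp
      ring
    · push_cast
      rw [hSn]
      simp only [one_pow]
      linarith [hb]
  · -- b₄ ≠ 1
    have hDne : ((b₄ : ℝ) - 1) ≠ 0 := by
      intro h0
      apply hb4
      have : (b₄ : ℝ) = 1 := by linarith
      exact_mod_cast this
    rcases eq_or_ne (b₄ ^ n) 1 with hbn | hbn
    · -- Case B2 : b₄ = -1, n even
      have hunit : IsUnit b₄ := by
        refine IsUnit.of_mul_eq_one (a := b₄) (b₄ ^ (n - 1)) ?_
        rw [← pow_succ']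
        have : n - 1 + 1 = n := by omega
        rw [this]; exact hbn
      have hb4m : b₄ = -1 := by
        rcases Int.isUnit_iff.mp hunit with h1 | h1
        · exact absurd h1 hb4
        · exact h1
      subst hb4m
      have heven : Even n := by
        by_contra hodd
        rw [Nat.not_even_iff_odd] at hodd
        have hne : ((-1 : ℤ)) ^ n = -1 := hodd.neg_one_pow
        rw [hne] at hbn
        norm_num at hbn
      have hn2 : 2 ≤ n := by
        rcases heven with ⟨m, hm⟩; omega
      have hpowR : ((-1 : ℤ) : ℝ) ^ n = 1 := by
        push_cast
        exact heven.neg_one_pow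
      have hS0 : S = 0 := by
        rw [hpowR] at hS
        have h1 : S * (((-1 : ℤ) : ℝ) - 1) = 0 := by rw [hS]; ring
        rcases mul_eq_zero.mp h1 with h2 | h2
        · exact h2
        · exact absurd h2 hDne
      set H : ℤ := c₁ * (-1 - 1) - c₂ * b₃ with hH_def
      have hHne : H ≠ 0 := h
      have hbound : (2 : ℝ) ≤ |(n : ℝ) * (H : ℝ)| := by
        rw [abs_mul]
        have h1 : (1:ℝ) ≤ |(H : ℝ)| := by
          have := Int.one_le_abs hHne
          calc (1:ℝ) ≤ ((|H| : ℤ) : ℝ) := by exact_mod_cast this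
            _ = |(H : ℝ)| := by push_cast; rfl
        have h2 : (2:ℝ) ≤ |(n : ℝ)| := by
          rw [abs_of_nonneg (by positivity)]; exact_mod_cast hn2
        nlinarith
      obtain ⟨k, t, ht0, ht1, hk⟩ := hit_aux 2 ((n : ℝ) * (H : ℝ))
        (((b₃ : ℝ) * δ * T + n * ε) * (-2)) two_pos hbound
      have hHR : (H : ℝ) = (c₁ : ℝ) * (-1 - 1) - (c₂ : ℝ) * (b₃ : ℝ) := by
        rw [hH_def]; push_cast; ring
      rw [hHR] at hk
      have hT' : (((-1 : ℤ) : ℝ) - 1) * T = S - n := hT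
      rw [hS0] at hT'
      push_cast at hT'
      refine ⟨-k, 0, 0, 0, t, ht0, ht1, ?_, ?_⟩
      · have key : ((-k : ℤ) : ℝ) * (-2) =
            (((n : ℝ) * c₁ + (b₃ : ℝ) * c₂ * T) * t + (b₃ : ℝ) * δ * T + n * ε) * (-2) := by
          push_cast
          linear_combination -hk - (b₃ : ℝ) * (c₂ : ℝ) * t * hT'
        have h2ne : (-2 : ℝ) ≠ 0 := by norm_num
        have hcc := mul_right_cancel₀ h2ne key
        push_cast at hcc ⊢
        rw [hS0]
        linarith [hcc]
      · push_cast
        rw [hS0]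
        push_cast at hpowR
        rw [hpowR]
        ring
    · -- Case A : b₄ ≠ 1 and b₄ ^ n ≠ 1
      have hRne : ((b₄ : ℝ) ^ n - 1) ≠ 0 := by
        intro h0
        apply hbn
        have : ((b₄ ^ n : ℤ) : ℝ) = ((1 : ℤ) : ℝ) := by push_cast; linarith
        exact_mod_cast this
      set H : ℤ := c₁ * (b₄ - 1) - c₂ * b₃ with hH_def
      have hHne : H ≠ 0 := h
      set D : ℤ := b₄ - 1 with hD_def
      have hDz : D ≠ 0 := by intro h0; apply hb4; omega
      set g : ℕ := Int.gcd D b₃ with hg_def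
      have hg0 : g ≠ 0 := by
        rw [hg_def, Ne, Int.gcd_eq_zero_iff]
        rintro ⟨h1, -⟩
        exact hDz h1
      have hgdvdH : (g : ℤ) ∣ (n : ℤ) * H := by
        apply Dvd.dvd.mul_left
        rw [hH_def]
        have hd1 : (g : ℤ) ∣ D := Int.gcd_dvd_left D b₃
        have hd2 : (g : ℤ) ∣ b₃ := Int.gcd_dvd_right D b₃
        rw [hD_def] at hd1
        exact dvd_sub (hd1.mul_left c₁) (hd2.mul_left c₂)
      have hnH : (n : ℤ) * H ≠ 0 := by
        apply mul_ne_zero _ hHne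
        have : (0 : ℤ) < (n : ℤ) := by exact_mod_cast hn
        omega
      have hleZ : (g : ℤ) ≤ |(n : ℤ) * H| :=
        Int.le_of_dvd (abs_pos.mpr hnH) ((dvd_abs _ _).mpr hgdvdH)
      have hbound : ((g : ℕ) : ℝ) ≤ |(n : ℝ) * (H : ℝ)| := by
        have h1 : |(n : ℝ) * (H : ℝ)| = ((|(n : ℤ) * H| : ℤ) : ℝ) := by push_cast; ring_nf
        rw [h1]
        exact_mod_cast hleZ
      have hgposR : (0 : ℝ) < (g : ℕ) := by
        have : 0 < g := Nat.pos_of_ne_zero hg0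
        exact_mod_cast this
      obtain ⟨k, t, ht0, ht1, hk⟩ := hit_aux ((g : ℕ) : ℝ) ((n : ℝ) * (H : ℝ))
        ((n : ℝ) * ((b₄ : ℝ) - 1) * ε - (n : ℝ) * (b₃ : ℝ) * δ) hgposR hbound
      set u : ℤ := Int.gcdA D b₃ with hu_def
      set v : ℤ := Int.gcdB D b₃ with hv_def
      have hbez : ((g : ℕ) : ℤ) = D * u + b₃ * v := Int.gcd_eq_gcd_ab D b₃
      have hbezR : ((g : ℕ) : ℝ) = ((b₄ : ℝ) - 1) * (u : ℝ) + (b₃ : ℝ) * (v : ℝ) := by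
        have h' : ((g : ℕ) : ℤ) = (b₄ - 1) * u + b₃ * v := by rw [hbez, hD_def]
        exact_mod_cast h'
      have hHR : (H : ℝ) = (c₁ : ℝ) * ((b₄ : ℝ) - 1) - (c₂ : ℝ) * (b₃ : ℝ) := by
        rw [hH_def, hD_def]; push_cast; ring
      obtain ⟨y, hy⟩ : ∃ y : ℝ, y * ((b₄ : ℝ) ^ n - 1) =
          ((-(k * v) : ℤ) : ℝ) - (c₂ : ℝ) * S * t - δ * S :=
        ⟨_, div_mul_cancel₀ _ hRne⟩
      refine ⟨k * u, -(k * v), 0, y, t, ht0, ht1, ?_, ?_⟩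
      · have key : ((k * u : ℤ) : ℝ) * ((b₄ : ℝ) - 1) =
            (b₃ : ℝ) * ((-(k * v) : ℤ) : ℝ) + (n : ℝ) * (H : ℝ) * t +
              ((n : ℝ) * ((b₄ : ℝ) - 1) * ε - (n : ℝ) * (b₃ : ℝ) * δ) := by
          push_cast
          linear_combination -hk - (k : ℝ) * hbezR
        rw [hHR] at key
        have g1 : ((k * u : ℤ) : ℝ) * ((b₄ : ℝ) - 1) =
            ((b₃ : ℝ) * S * y + ((n : ℝ) * (c₁ : ℝ) + (b₃ : ℝ) * (c₂ : ℝ) * T) * t +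
              (b₃ : ℝ) * δ * T + (n : ℝ) * ε) * ((b₄ : ℝ) - 1) := by
          linear_combination key - ((b₃ : ℝ) * (c₂ : ℝ) * t + (b₃ : ℝ) * δ) * hT -
            (b₃ : ℝ) * y * hS - (b₃ : ℝ) * hy
        have := mul_right_cancel₀ hDne g1
        linarith [this]
      · linear_combination -hy
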